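/- Fix h ≥ 0 and let Ψ_h(p) = exp(h·cv₁(p)) for p ∈ (0,1), where cv₁(p) = Φ⁻¹(1−p). Then Ψ_h is completely monotone on (0, 1/2]: for every integer k ≥ 0 and every p ∈ (0, 1/2], 0 ≤ (−1)^k Ψ_h^{(k)}(p). -/

import Mathlib

/-- The standard normal density φ(x) = (2π)^{-1/2} exp(-x²/2). -/
noncomputable def stdNormalPdf (x : ℝ) : ℝ :=
  (Real.sqrt (2 * Real.pi))⁻¹ * Real.exp (-x ^ 2 / 2)

/-- The standard normal CDF Φ(x) = ∫_{-∞}^x φ(t) dt. -/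
noncomputable def stdNormalCdf (x : ℝ) : ℝ :=
  ∫ t in Set.Iic x, stdNormalPdf t

open MeasureTheory Real Filter

set_option maxHeartbeats 1000000

lemma pdf_pos (x : ℝ) : 0 < stdNormalPdf x := by
  unfold stdNormalPdf
  positivity

lemma pdf_cont : Continuous stdNormalPdf := by
  unfold stdNormalPdf
  continuity

lemma pdf_integrable : Integrable stdNormalPdf := by
  unfold stdNormalPdf
  apply Integrable.const_mul
  have : (fun x : ℝ => Real.exp (-x ^ 2 / 2)) = fun x : ℝ => Real.exp (-(2⁻¹ : ℝ) * x ^ 2) := by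
    ext x; ring_nf
  rw [this]
  exact integrable_exp_neg_mul_sq (by norm_num)

lemma pdf_total : ∫ x, stdNormalPdf x = 1 := by
  unfold stdNormalPdf
  rw [MeasureTheory.integral_const_mul]
  have : (fun x : ℝ => Real.exp (-x ^ 2 / 2)) = fun x : ℝ => Real.exp (-(2⁻¹ : ℝ) * x ^ 2) := by
    ext x; ring_nf
  rw [this, integral_gaussian]
  rw [show (π / 2⁻¹) = 2 * π by ring]
  rw [inv_mul_cancel₀]
  positivity

lemma cdf_sub (a b : ℝ) : stdNormalCdf b - stdNormalCdf a = ∫ t in a..b, stdNormalPdf t := by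
  rw [stdNormalCdf, stdNormalCdf]
  exact intervalIntegral.integral_Iic_sub_Iic pdf_integrable.integrableOn
    pdf_integrable.integrableOn

lemma cdf_hasDeriv (x : ℝ) : HasDerivAt stdNormalCdf (stdNormalPdf x) x := by
  have key : ∀ y, stdNormalCdf y = stdNormalCdf 0 + ∫ t in (0:ℝ)..y, stdNormalPdf t := by
    intro y; rw [← cdf_sub]; ring
  have : HasDerivAt (fun y => stdNormalCdf 0 + ∫ t in (0:ℝ)..y, stdNormalPdf t)
      (stdNormalPdf x) x := by
    apply HasDerivAt.const_add
    exact intervalIntegral.integral_hasDerivAt_right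
      (pdf_integrable.intervalIntegrable)
      (pdf_cont.stronglyMeasurableAtFilter _ _)
      pdf_cont.continuousAt
  exact this.congr_of_eventuallyEq (Filter.Eventually.of_forall fun y => (key y))

lemma cdf_strictMono : StrictMono stdNormalCdf := by
  intro a b hab
  have : 0 < stdNormalCdf b - stdNormalCdf a := by
    rw [cdf_sub]
    apply intervalIntegral.intervalIntegral_pos_of_pos_on
      pdf_integrable.intervalIntegrable (fun x _ => pdf_pos x) hab
  linarith

lemma cdf_half : stdNormalCdf 0 = 1 / 2 := by
  have h2 := integral_comp_neg_Iic (0:ℝ) stdNormalPdf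
  rw [neg_zero] at h2
  have heven : ∀ t : ℝ, stdNormalPdf (-t) = stdNormalPdf t := by
    intro t; unfold stdNormalPdf; ring_nf
  simp only [heven] at h2
  have htot : (∫ t in Set.Iic (0:ℝ), stdNormalPdf t) + ∫ t in Set.Ioi (0:ℝ), stdNormalPdf t = 1 := by
    rw [← pdf_total]
    exact intervalIntegral.integral_Iic_add_Ioi pdf_integrable.integrableOn pdf_integrable.integrableOn
  rw [stdNormalCdf]
  linarith

section cv
variable (cv : ℝ → ℝ) (hcv : ∀ p ∈ Set.Ioo (0 : ℝ) 1, stdNormalCdf (cv p) = 1 - p)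

include hcv in
lemma cv_cont : ∀ p ∈ Set.Ioo (0:ℝ) 1, ContinuousAt cv p := by
  intro p hp
  rw [ContinuousAt]
  have hev : ∀ᶠ q in nhds p, q ∈ Set.Ioo (0:ℝ) 1 := isOpen_Ioo.eventually_mem hp
  rw [tendsto_order]
  constructor
  · intro b hb
    have h1 : stdNormalCdf b < 1 - p := by rw [← hcv p hp]; exact cdf_strictMono hb
    have h2 : ∀ᶠ q in nhds p, q < 1 - stdNormalCdf b := gt_mem_nhds (by linarith)
    filter_upwards [hev, h2] with q hq hq2
    have : stdNormalCdf b < stdNormalCdf (cv q) := by rw [hcv q hq]; linarith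
    exact cdf_strictMono.lt_iff_lt.mp this
  · intro b hb
    have h1 : 1 - p < stdNormalCdf b := by rw [← hcv p hp]; exact cdf_strictMono hb
    have h2 : ∀ᶠ q in nhds p, 1 - stdNormalCdf b < q := lt_mem_nhds (by linarith)
    filter_upwards [hev, h2] with q hq hq2
    have : stdNormalCdf (cv q) < stdNormalCdf b := by rw [hcv q hq]; linarith
    exact cdf_strictMono.lt_iff_lt.mp this

include hcv in
lemma cv_hasDeriv : ∀ p ∈ Set.Ioo (0:ℝ) 1, HasDerivAt cv (-(stdNormalPdf (cv p))⁻¹) p := by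
  intro p hp
  have hf : HasDerivAt (fun x => 1 - stdNormalCdf x) (-(stdNormalPdf (cv p))) (cv p) :=
    (cdf_hasDeriv (cv p)).const_sub 1
  have hne : -(stdNormalPdf (cv p)) ≠ 0 := by have := pdf_pos (cv p); linarith
  have hfg : ∀ᶠ y in nhds p, (fun x => 1 - stdNormalCdf x) (cv y) = y := by
    filter_upwards [isOpen_Ioo.eventually_mem hp] with q hq
    simp [hcv q hq]
  have := HasDerivAt.of_local_left_inverse (cv_cont cv hcv p hp) hf hne hfg
  rw [inv_neg] at this
  exact this

include hcv in
lemma cv_nonneg : ∀ p ∈ Set.Ioc (0:ℝ) (1/2), 0 ≤ cv p := by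
  intro p hp
  have hp1 : p ∈ Set.Ioo (0:ℝ) 1 := ⟨hp.1, by linarith [hp.2]⟩
  by_contra hneg
  push_neg at hneg
  have : stdNormalCdf (cv p) < stdNormalCdf 0 := cdf_strictMono hneg
  rw [hcv p hp1, cdf_half] at this
  linarith [hp.2]

end cv

/-- A cone of functions: nonnegative combinations of `x ^ a * exp (h x + m x² / 2)`. -/
inductive InCone (h : ℝ) : (ℝ → ℝ) → Prop
  | base (a m : ℕ) : InCone h (fun x => x ^ a * Real.exp (h * x + m * x ^ 2 / 2))
  | add {F G : ℝ → ℝ} : InCone h F → InCone h G → InCone h (fun x => F x + G x)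
  | smul {F : ℝ → ℝ} (c : ℝ) (hc : 0 ≤ c) : InCone h F → InCone h (fun x => c * F x)

lemma cone_nonneg {h : ℝ} {F : ℝ → ℝ} (hF : InCone h F) : ∀ x, 0 ≤ x → 0 ≤ F x := by
  induction hF with
  | base a m => intro x hx; positivity
  | add hF hG ihF ihG => intro x hx; exact add_nonneg (ihF x hx) (ihG x hx)
  | smul c hc hF ih => intro x hx; exact mul_nonneg hc (ih x hx)

lemma cone_deriv {h : ℝ} (hh : 0 ≤ h) {F : ℝ → ℝ} (hF : InCone h F) :
    ∃ H, InCone h H ∧ ∀ x, HasDerivAt F (stdNormalPdf x * H x) x := by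
  induction hF with
  | base a m =>
    set s := Real.sqrt (2 * Real.pi) with hs
    have hs0 : (0:ℝ) < s := by rw [hs]; positivity
    refine ⟨fun x => (s * a) * (x ^ (a-1) * Real.exp (h * x + ((m+1 : ℕ):ℝ) * x ^ 2 / 2))
      + ((s * h) * (x ^ a * Real.exp (h * x + ((m+1 : ℕ):ℝ) * x ^ 2 / 2))
        + (s * m) * (x ^ (a+1) * Real.exp (h * x + ((m+1 : ℕ):ℝ) * x ^ 2 / 2))), ?_, ?_⟩
    · exact InCone.add (InCone.smul _ (by positivity) (InCone.base (a-1) (m+1)))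
        (InCone.add (InCone.smul _ (by positivity) (InCone.base a (m+1)))
          (InCone.smul _ (by positivity) (InCone.base (a+1) (m+1))))
    · intro x
      have hu : HasDerivAt (fun x : ℝ => h * x + (m:ℝ) * x ^ 2 / 2) (h + m * x) x := by
        have h1 : HasDerivAt (fun x : ℝ => h * x) h x := by
          simpa using (hasDerivAt_id x).const_mul h
        have h2 := (hasDerivAt_pow 2 x).const_mul ((m:ℝ)/2)
        have heq : (fun x : ℝ => h * x + (m:ℝ) * x ^ 2 / 2)
            = (fun y : ℝ => h * y + (m:ℝ)/2 * y ^ 2) := by ext y; ring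
        rw [heq]
        refine (h1.add h2).congr_deriv ?_
        simp; ring
      have hexp := hu.exp
      have hprod := (hasDerivAt_pow a x).mul hexp
      refine hprod.congr_deriv ?_
      have hE : Real.exp (h * x + (m:ℝ) * x ^ 2 / 2)
          = Real.exp (-x ^ 2 / 2) * Real.exp (h * x + ((m+1 : ℕ):ℝ) * x ^ 2 / 2) := by
        rw [← Real.exp_add]; congr 1; push_cast; ring
      rw [hE]
      unfold stdNormalPdf
      rw [hs]
      generalize hsg : Real.sqrt (2 * Real.pi) = t
      have ht : t ≠ 0 := by rw [← hsg]; positivity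
      field_simp
      ring
  | add hF hG ihF ihG =>
    obtain ⟨H1, hH1, hd1⟩ := ihF
    obtain ⟨H2, hH2, hd2⟩ := ihG
    refine ⟨fun x => H1 x + H2 x, InCone.add hH1 hH2, fun x => ?_⟩
    refine ((hd1 x).add (hd2 x)).congr_deriv ?_
    ring
  | smul c hc hF ih =>
    obtain ⟨H, hH, hd⟩ := ih
    refine ⟨fun x => c * H x, InCone.smul c hc hH, fun x => ?_⟩
    refine ((hd x).const_mul c).congr_deriv ?_
    ring

/-- fix h ≥ 0 and let Ψ_h(p) = exp(h·cv₁(p)) with cv₁(p) = Φ⁻¹(1−p) on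
(0,1). Then Ψ_h is completely monotone on (0, 1/2]: for every integer k ≥ 0 and every
p ∈ (0, 1/2], 0 ≤ (−1)^k Ψ_h^{(k)}(p). -/
theorem stmt_11 (h : ℝ) (hh : 0 ≤ h)
    (cv : ℝ → ℝ) (hcv : ∀ p ∈ Set.Ioo (0 : ℝ) 1, stdNormalCdf (cv p) = 1 - p) :
    ∀ k : ℕ, ∀ p ∈ Set.Ioc (0 : ℝ) (1 / 2),
      0 ≤ (-1 : ℝ) ^ k * iteratedDeriv k (fun q => Real.exp (h * cv q)) p := by
  have main : ∀ k : ℕ, ∃ F, InCone h F ∧ ∀ p ∈ Set.Ioo (0:ℝ) 1,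
      (-1:ℝ)^k * iteratedDeriv k (fun q => Real.exp (h * cv q)) p = F (cv p) := by
    intro k
    induction k with
    | zero =>
      refine ⟨_, InCone.base 0 0, ?_⟩
      intro p hp
      simp [iteratedDeriv_zero]
    | succ k ih =>
      obtain ⟨F, hF, hFeq⟩ := ih
      obtain ⟨H, hH, hHd⟩ := cone_deriv hh hF
      refine ⟨H, hH, ?_⟩
      intro p hp
      have hsq : ((-1:ℝ)^k) * ((-1:ℝ)^k) = 1 := by
        rw [← pow_add]
        exact Even.neg_one_pow ⟨k, rfl⟩
      have hev : iteratedDeriv k (fun q => Real.exp (h * cv q))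
          =ᶠ[nhds p] (fun q => (-1:ℝ)^k * F (cv q)) := by
        filter_upwards [isOpen_Ioo.eventually_mem hp] with q hq
        have he := hFeq q hq
        calc iteratedDeriv k (fun q => Real.exp (h * cv q)) q
            = ((-1:ℝ)^k * (-1:ℝ)^k) * iteratedDeriv k (fun q => Real.exp (h * cv q)) q := by
              rw [hsq]; ring
          _ = (-1:ℝ)^k * F (cv q) := by rw [mul_assoc, he]
      rw [iteratedDeriv_succ, hev.deriv_eq]
      have hderiv : HasDerivAt (fun q => (-1:ℝ)^k * F (cv q))
          ((-1:ℝ)^k * ((stdNormalPdf (cv p) * H (cv p)) * (-(stdNormalPdf (cv p))⁻¹))) p :=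
        ((hHd (cv p)).comp p (cv_hasDeriv cv hcv p hp)).const_mul _
      rw [hderiv.deriv]
      have hpdfne : stdNormalPdf (cv p) ≠ 0 := (pdf_pos _).ne'
      have h1 : (stdNormalPdf (cv p) * H (cv p)) * (-(stdNormalPdf (cv p))⁻¹) = -H (cv p) := by
        field_simp
      rw [h1, pow_succ]
      linear_combination H (cv p) * hsq
  intro k p hp
  obtain ⟨F, hF, hFeq⟩ := main k
  rw [hFeq p ⟨hp.1, lt_of_le_of_lt hp.2 (by norm_num)⟩]
  exact cone_nonneg hF _ (cv_nonneg cv hcv p hp)
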